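/- Let m ≥ 2. For every j ≥ 0, every v with 0 ≤ v ≤ m, and every r with 1 ≤ r ≤ m−1, sf(m^j (mv + r), m) = v + 1. -/

import Mathlib

/-- The semi-`m`-Fibonacci numbers: `sfm m 0 = 1`; `sfm m n = sfm m (n / m)` if
`n > 0` and `m ∣ n`; and `sfm m n = sfm m (n - r) + sfm m (n - m)` if
`n ≡ r (mod m)` with `0 < r < m`, where terms with negative argument are `0`
(the value for `m ≤ 1` is junk). -/
def sfm (m : ℕ) : ℕ → ℕ
  | 0 => 1
  | n + 1 =>
    if m ≤ 1 then 0
    else if (n + 1) % m = 0 then sfm m ((n + 1) / m)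
    else sfm m ((n + 1) - (n + 1) % m) +
      if n + 1 < m then 0 else sfm m ((n + 1) - m)
  termination_by n => n
  decreasing_by
  · exact Nat.div_lt_self (Nat.succ_pos n) (by omega)
  · omega
  · omega

lemma sfm_succ (m n : ℕ) : sfm m (n + 1) =
    if m ≤ 1 then 0
    else if (n + 1) % m = 0 then sfm m ((n + 1) / m)
    else sfm m ((n + 1) - (n + 1) % m) +
      if n + 1 < m then 0 else sfm m ((n + 1) - m) := by
  rw [sfm]

lemma sfm_zero (m : ℕ) : sfm m 0 = 1 := by rw [sfm]

lemma sfm_mul (m : ℕ) (hm : 2 ≤ m) (n : ℕ) (hn : 0 < n) :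
    sfm m (m * n) = sfm m n := by
  have hpos : 0 < m * n := Nat.mul_pos (by omega) hn
  obtain ⟨k, hk⟩ : ∃ k, m * n = k + 1 := ⟨m * n - 1, by omega⟩
  rw [hk, sfm_succ, if_neg (by omega), ← hk, if_pos (Nat.mul_mod_right m n),
    Nat.mul_div_cancel_left _ (by omega)]

lemma sfm_lt (m : ℕ) (hm : 2 ≤ m) (v : ℕ) (hv : v < m) : sfm m v = 1 := by
  match v with
  | 0 => exact sfm_zero m
  | k + 1 =>
    rw [sfm_succ, if_neg (by omega), if_neg (by rw [Nat.mod_eq_of_lt hv]; omega),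
      Nat.mod_eq_of_lt hv, if_pos hv, Nat.sub_self, sfm_zero]

lemma sfm_le (m : ℕ) (hm : 2 ≤ m) (v : ℕ) (hv : v ≤ m) : sfm m v = 1 := by
  rcases Nat.lt_or_ge v m with h | h
  · exact sfm_lt m hm v h
  · have hv : v = m := by omega
    have h1 : sfm m m = sfm m 1 := by
      have := sfm_mul m hm 1 one_pos
      rwa [mul_one] at this
    rw [hv, h1, sfm_lt m hm 1 (by omega)]

lemma sfm_base (m : ℕ) (hm : 2 ≤ m) : ∀ v r : ℕ, v ≤ m → 1 ≤ r → r ≤ m - 1 →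
    sfm m (m * v + r) = v + 1 := by
  intro v
  induction v with
  | zero =>
    intro r _ hr1 hr2
    simp only [Nat.mul_zero, Nat.zero_add]
    rw [sfm_lt m hm r (by omega)]
  | succ v ih =>
    intro r hv hr1 hr2
    obtain ⟨k, hk⟩ : ∃ k, m * (v + 1) + r = k + 1 := ⟨m * (v + 1) + r - 1, by omega⟩
    have hmod : (m * (v + 1) + r) % m = r := by
      rw [Nat.mul_add_mod, Nat.mod_eq_of_lt (by omega)]
    rw [hk, sfm_succ, if_neg (by omega), ← hk, hmod, if_neg (by omega),
      if_neg (by push_neg; calc m ≤ m * (v+1) := by nlinarith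
                                _ ≤ m * (v+1) + r := by omega)]
    have h1 : m * (v + 1) + r - r = m * (v + 1) := by omega
    have h2 : m * (v + 1) + r - m = m * v + r := by
      have : m * (v + 1) = m * v + m := by ring
      omega
    rw [h1, h2, sfm_mul m hm _ (by omega), sfm_le m hm _ (by omega),
      ih r (by omega) hr1 hr2]
    omega

theorem sfm_pow_mul (m : ℕ) (hm : 2 ≤ m) :
    ∀ j v r : ℕ, v ≤ m → 1 ≤ r → r ≤ m - 1 →
      sfm m (m ^ j * (m * v + r)) = v + 1 := by
  intro j
  induction j with
  | zero => intro v r hv hr1 hr2; rw [pow_zero, one_mul]; exact sfm_base m hm v r hv hr1 hr2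
  | succ j ih =>
    intro v r hv hr1 hr2
    rw [pow_succ, mul_comm (m ^ j) m, mul_assoc,
      sfm_mul m hm _ (Nat.mul_pos (pow_pos (by omega) j) (by omega))]
    exact ih v r hv hr1 hr2
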